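/- (Reduction rule 4, resolution at an innermost existential variable of degree two.) Let φ be a CNF formula over x₁,…,xₙ in which the variable xₙ appears in exactly two clauses: positively in a clause Cᵢ and negatively in a clause Cⱼ (with Cᵢ ≠ Cⱼ, and neither clause containing both polarities of xₙ). Let φ' be the CNF formula over x₁,…,xₙ₋₁ obtained from φ by replacing Cᵢ and Cⱼ by the single resolvent clause (Cᵢ \ {xₙ}) ∪ (Cⱼ \ {¬xₙ}). Then for every choice of quantifiers Q₁,…,Qₙ₋₁ ∈ {∃,∀}, the quantified formula Q₁x₁⋯Qₙ₋₁xₙ₋₁ ∃xₙ φ is true if and only if Q₁x₁⋯Qₙ₋₁xₙ₋₁ φ' is true. -/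

import Mathlib

/-- Quantifiers for quantified Boolean formulas. -/
inductive Quant
  | ex  : Quant
  | all : Quant

/-- A CNF formula over the variables `x₁, …, xₙ`: a finite list of clauses,
each clause being a finite set of literals, a literal being a pair of a
variable and a polarity (`true` for `xᵢ`, `false` for `¬xᵢ`). -/
abbrev CNF (n : ℕ) := List (Finset (Fin n × Bool))

/-- A valuation `ν` satisfies a CNF formula `φ` if every clause of `φ`
contains a literal made true by `ν`. -/
def CNF.sat {n : ℕ} (ν : Fin n → Bool) (φ : CNF n) : Prop :=
  ∀ C ∈ φ, ∃ l ∈ C, ν l.1 = l.2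

/-- Truth of the quantified Boolean formula `Q₁x₁ ⋯ Qₙxₙ, P`:
the values of `x₁, …, xₙ` are quantified in this order. -/
def QbfTrue : {n : ℕ} → (Fin n → Quant) → ((Fin n → Bool) → Prop) → Prop
  | 0, _, P => P (fun i => i.elim0)
  | _ + 1, Q, P =>
    match Q 0 with
    | Quant.ex => ∃ b, QbfTrue (fun i => Q i.succ) (fun ν => P (Fin.cons b ν))
    | Quant.all => ∀ b, QbfTrue (fun i => Q i.succ) (fun ν => P (Fin.cons b ν))

/-- Recasting of a clause over `x₁, …, xₙ₊₁` as a clause over `x₁, …, xₙ`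
(the variables of the form `Fin.castSucc i`), deleting any literal on the
innermost variable `xₙ₊₁ = Fin.last n`. -/
def Clause.dropLast {n : ℕ} (C : Finset (Fin (n + 1) × Bool)) :
    Finset (Fin n × Bool) :=
  Finset.univ.filter (fun l : Fin n × Bool => (l.1.castSucc, l.2) ∈ C)


lemma qbfTrue_ex_head {n : ℕ} (Q : Fin (n + 1) → Quant) (hQ : Q 0 = Quant.ex)
    (P : (Fin (n + 1) → Bool) → Prop) :
    QbfTrue Q P ↔ ∃ b, QbfTrue (fun i => Q i.succ) (fun ν => P (Fin.cons b ν)) := by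
  change (match Q 0 with
    | Quant.ex => ∃ b, QbfTrue (fun i => Q i.succ) fun ν => P (Fin.cons b ν)
    | Quant.all => ∀ b, QbfTrue (fun i => Q i.succ) fun ν => P (Fin.cons b ν)) ↔ _
  rw [hQ]

lemma qbfTrue_all_head {n : ℕ} (Q : Fin (n + 1) → Quant) (hQ : Q 0 = Quant.all)
    (P : (Fin (n + 1) → Bool) → Prop) :
    QbfTrue Q P ↔ ∀ b, QbfTrue (fun i => Q i.succ) (fun ν => P (Fin.cons b ν)) := by
  change (match Q 0 with
    | Quant.ex => ∃ b, QbfTrue (fun i => Q i.succ) fun ν => P (Fin.cons b ν)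
    | Quant.all => ∀ b, QbfTrue (fun i => Q i.succ) fun ν => P (Fin.cons b ν)) ↔ _
  rw [hQ]

lemma qbfTrue_congr : ∀ {n : ℕ} (Q : Fin n → Quant) (P P' : (Fin n → Bool) → Prop),
    (∀ ν, P ν ↔ P' ν) → (QbfTrue Q P ↔ QbfTrue Q P')
  | 0, Q, P, P', h => h _
  | m + 1, Q, P, P', h => by
    unfold QbfTrue
    cases Q 0 with
    | ex => exact exists_congr fun b => qbfTrue_congr _ _ _ fun ν => h _
    | all => exact forall_congr' fun b => qbfTrue_congr _ _ _ fun ν => h _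

lemma snoc_succ {n : ℕ} (Q : Fin (n + 1) → Quant) (q : Quant) :
    (fun i : Fin (n + 1) => (Fin.snoc Q q : Fin (n + 2) → Quant) i.succ)
      = Fin.snoc (fun i => Q i.succ) q := by
  funext i
  induction i using Fin.lastCases with
  | last => simp [Fin.succ_last]
  | cast j => show (Fin.snoc Q q : Fin (n + 2) → Quant) (j.succ.castSucc) = (Fin.snoc (fun i => Q i.succ) q : Fin (n + 1) → Quant) j.castSucc; rw [Fin.snoc_castSucc, Fin.snoc_castSucc]

lemma qbfTrue_snoc_ex : ∀ {n : ℕ} (Q : Fin n → Quant) (P : (Fin (n + 1) → Bool) → Prop),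
    QbfTrue (Fin.snoc Q Quant.ex) P ↔ QbfTrue Q (fun ν => ∃ b, P (Fin.snoc ν b))
  | 0, Q, P => by
    have h0 : (Fin.snoc Q Quant.ex : Fin 1 → Quant) 0 = Quant.ex := by
      have h : (0 : Fin 1) = Fin.last 0 := rfl
      rw [h, Fin.snoc_last]
    simp only [QbfTrue, h0]
    refine exists_congr fun b => ?_
    have h : (Fin.cons b (fun i : Fin 0 => i.elim0) : Fin 1 → Bool)
        = Fin.snoc (fun i : Fin 0 => i.elim0) b := by
      funext i
      fin_cases i
      rfl
    rw [h]
  | m + 1, Q, P => by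
    have h0 : (Fin.snoc Q Quant.ex : Fin (m + 2) → Quant) 0 = Q 0 := by
      have h : (0 : Fin (m + 2)) = Fin.castSucc 0 := rfl
      rw [h, Fin.snoc_castSucc]
    cases hQ0 : Q 0 with
    | ex =>
      rw [qbfTrue_ex_head _ (h0.trans hQ0), qbfTrue_ex_head Q hQ0]
      refine exists_congr fun b => ?_
      rw [snoc_succ Q Quant.ex, qbfTrue_snoc_ex]
      exact qbfTrue_congr _ _ _ fun ν => by
        simp [Fin.cons_snoc_eq_snoc_cons]
    | all =>
      rw [qbfTrue_all_head _ (h0.trans hQ0), qbfTrue_all_head Q hQ0]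
      refine forall_congr' fun b => ?_
      rw [snoc_succ Q Quant.ex, qbfTrue_snoc_ex]
      exact qbfTrue_congr _ _ _ fun ν => by
        simp [Fin.cons_snoc_eq_snoc_cons]

lemma mem_dropLast {n : ℕ} (C : Finset (Fin (n + 1) × Bool)) (l : Fin n × Bool) :
    l ∈ Clause.dropLast C ↔ (l.1.castSucc, l.2) ∈ C := by
  simp [Clause.dropLast]

lemma sat_clause_no_last {n : ℕ} (C : Finset (Fin (n + 1) × Bool))
    (hC : ∀ b : Bool, (Fin.last n, b) ∉ C) (ν : Fin n → Bool) (b : Bool) :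
    (∃ l ∈ C, (Fin.snoc ν b : Fin (n + 1) → Bool) l.1 = l.2) ↔
      (∃ l ∈ Clause.dropLast C, ν l.1 = l.2) := by
  constructor
  · rintro ⟨⟨i, c⟩, hmem, hv⟩
    have hi : i ≠ Fin.last n := by rintro rfl; exact hC c hmem
    obtain ⟨j, rfl⟩ := (Fin.exists_castSucc_eq).2 hi
    exact ⟨(j, c), (mem_dropLast C (j, c)).2 hmem, by simpa using hv⟩
  · rintro ⟨⟨j, c⟩, hmem, hv⟩
    exact ⟨(j.castSucc, c), (mem_dropLast C (j, c)).1 hmem, by simpa using hv⟩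

/-- Reduction rule 4 of the QBF-2 algorithm, resolution at an innermost
existential variable of degree two: suppose the innermost variable `xₙ₊₁`
appears in exactly two clauses of `φ`, positively in `Ci` and negatively in `Cj`
(with `Ci ≠ Cj`, and neither clause containing both polarities of `xₙ₊₁`), and
let `φ'` be obtained from `φ` by replacing `Ci` and `Cj` by the single resolvent
clause `(Ci \ {xₙ₊₁}) ∪ (Cj \ {¬xₙ₊₁})`. Then `Q₁x₁ ⋯ Qₙxₙ ∃xₙ₊₁ φ` is true iff
`Q₁x₁ ⋯ Qₙxₙ φ'` is true. -/
theorem resolution_innermost_existential {n : ℕ} (φ rest : CNF (n + 1))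
    (Ci Cj : Finset (Fin (n + 1) × Bool))
    (hφ : φ.Perm (Ci :: Cj :: rest))
    (hne : Ci ≠ Cj)
    (hiPos : (Fin.last n, true) ∈ Ci) (hiNeg : (Fin.last n, false) ∉ Ci)
    (hjNeg : (Fin.last n, false) ∈ Cj) (hjPos : (Fin.last n, true) ∉ Cj)
    (hrest : ∀ C ∈ rest, ∀ b : Bool, (Fin.last n, b) ∉ C)
    (Q : Fin n → Quant) :
    QbfTrue (Fin.snoc Q Quant.ex) (fun ν => CNF.sat ν φ) ↔
      QbfTrue Q (fun ν => CNF.sat ν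
        (Clause.dropLast ((Ci.erase (Fin.last n, true)) ∪
            (Cj.erase (Fin.last n, false))) :: rest.map Clause.dropLast)) := by
  rw [qbfTrue_snoc_ex]
  refine qbfTrue_congr _ _ _ fun ν => ?_
  have hsat : ∀ b, CNF.sat (Fin.snoc ν b) φ ↔
      ((∃ l ∈ Ci, (Fin.snoc ν b : Fin (n + 1) → Bool) l.1 = l.2) ∧
       (∃ l ∈ Cj, (Fin.snoc ν b : Fin (n + 1) → Bool) l.1 = l.2) ∧
       ∀ C ∈ rest, ∃ l ∈ C, (Fin.snoc ν b : Fin (n + 1) → Bool) l.1 = l.2) := by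
    intro b
    unfold CNF.sat
    constructor
    · intro h
      exact ⟨h Ci (hφ.mem_iff.2 (by simp)), h Cj (hφ.mem_iff.2 (by simp)),
        fun C hC => h C (hφ.mem_iff.2 (by simp [hC]))⟩
    · rintro ⟨h1, h2, h3⟩ C hC
      have hm := hφ.mem_iff.1 hC
      simp only [List.mem_cons] at hm
      rcases hm with rfl | rfl | hC'
      · exact h1
      · exact h2
      · exact h3 C hC'
  constructor
  · rintro ⟨b, hb⟩
    rw [hsat b] at hb
    obtain ⟨h1, h2, h3⟩ := hb
    intro C hC
    rcases List.mem_cons.1 hC with rfl | hC'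
    · cases b with
      | true =>
        obtain ⟨⟨i, c⟩, hmem, hv⟩ := h2
        have hi : i ≠ Fin.last n := by
          rintro rfl
          simp only [Fin.snoc_last] at hv
          subst hv
          exact hjPos hmem
        obtain ⟨j, rfl⟩ := (Fin.exists_castSucc_eq).2 hi
        refine ⟨(j, c), ?_, by simpa using hv⟩
        rw [mem_dropLast]
        exact Finset.mem_union.2 (Or.inr (Finset.mem_erase.2
          ⟨fun h => (Fin.castSucc_lt_last j).ne (congrArg Prod.fst h), hmem⟩))
      | false =>
        obtain ⟨⟨i, c⟩, hmem, hv⟩ := h1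
        have hi : i ≠ Fin.last n := by
          rintro rfl
          simp only [Fin.snoc_last] at hv
          subst hv
          exact hiNeg hmem
        obtain ⟨j, rfl⟩ := (Fin.exists_castSucc_eq).2 hi
        refine ⟨(j, c), ?_, by simpa using hv⟩
        rw [mem_dropLast]
        exact Finset.mem_union.2 (Or.inl (Finset.mem_erase.2
          ⟨fun h => (Fin.castSucc_lt_last j).ne (congrArg Prod.fst h), hmem⟩))
    · obtain ⟨C', hC'', rfl⟩ := List.mem_map.1 hC'
      exact (sat_clause_no_last C' (hrest C' hC'') ν b).1 (h3 C' hC'')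
  · intro h
    obtain ⟨⟨j, c⟩, hmem, hv⟩ := h _ List.mem_cons_self
    rw [mem_dropLast] at hmem
    have hrest' : ∀ b (C : Finset (Fin (n + 1) × Bool)), C ∈ rest →
        ∃ l ∈ C, (Fin.snoc ν b : Fin (n + 1) → Bool) l.1 = l.2 := by
      intro b C hC
      refine (sat_clause_no_last C (hrest C hC) ν b).2 ?_
      exact h _ (List.mem_cons_of_mem _ (List.mem_map.2 ⟨C, hC, rfl⟩))
    rcases Finset.mem_union.1 hmem with hin | hin
    · exact ⟨false, (hsat false).2 ⟨⟨(j.castSucc, c), Finset.mem_of_mem_erase hin,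
        by simpa using hv⟩, ⟨(Fin.last n, false), hjNeg, by simp⟩, hrest' false⟩⟩
    · exact ⟨true, (hsat true).2 ⟨⟨(Fin.last n, true), hiPos, by simp⟩,
        ⟨(j.castSucc, c), Finset.mem_of_mem_erase hin, by simpa using hv⟩, hrest' true⟩⟩
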